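/- Let H be a complex Hilbert space, and for each integer k let u_k ∈ H. Suppose κ > 0, s > 0, m ≥ 1, and for every k ≥ m the inequality k^{2s}(a_k + b_k) + (κ/2)k^{2s+1}(‖u_k‖² + ‖u_{-k}‖²) ≤ k^{2s}(c_k + d_k) holds, where a_k, b_k, c_k, d_k ≥ 0 and for all k ≥ m+1, c_{k-1} + d_{k-1} ≤ (1 + 1/ε_{k-1})(g_k + g_{-k}) + (1 + ε_{k-1})(a_{k+1} + b_{k+1}) with the choice ε_{k-2} = k^{2s}/(k-2)^{2s} - 1 for k ≥ m+2. If moreover (k-1)^{2s}(1 + 1/ε_{k-1}) ≤ k^{2s+1}/(2s) and a_k, b_k → 0 faster than any polynomial as k → ∞, then Σ_{k=m}^∞ k^{2s+1}(‖u_k‖² + ‖u_{-k}‖²) ≤ (1/(κs)) Σ_{k=m+1}^∞ k^{2s+1}(g_k + g_{-k}). -/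

import Mathlib

open Filter

/-- Abstract telescoping/summation lemma over real sequences. -/
theorem stmt_14_aux {U G A : ℕ → ℝ} {κ s : ℝ} (hκ : 0 < κ) (hs : 0 < s)
    (hU : ∀ i, 0 ≤ U i) (hG : ∀ i, 0 ≤ G i) (hA : ∀ i, 0 ≤ A i)
    (key : ∀ i, κ / 2 * U i ≤ 1 / (2 * s) * G i + (A (i + 2) - A i))
    (hA0 : Tendsto A atTop (nhds 0)) (hGs : Summable G) :
    ∑' i, U i ≤ 1 / (κ * s) * ∑' i, G i := by
  set T := ∑' i, G i with hT
  have hTnn : 0 ≤ T := tsum_nonneg hG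
  have hB0 : Tendsto (fun N => A N + A (N + 1)) atTop (nhds 0) := by
    have h := hA0.add (hA0.comp (tendsto_add_atTop_nat 1))
    simpa using h
  have hstep : ∀ N, κ / 2 * ∑ i ∈ Finset.range N, U i
      ≤ 1 / (2 * s) * T + (A N + A (N + 1)) := by
    intro N
    have h1 : ∑ i ∈ Finset.range N, (κ / 2 * U i)
        ≤ ∑ i ∈ Finset.range N, (1 / (2 * s) * G i + (A (i + 2) - A i)) :=
      Finset.sum_le_sum fun i _ => key i
    rw [← Finset.mul_sum] at h1
    have ht : ∑ i ∈ Finset.range N, (A (i + 2) - A i)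
        = (A N + A (N + 1)) - (A 0 + A 1) := by
      have h2 := Finset.sum_range_sub (f := fun j => A j + A (j + 1)) N
      rw [← h2]
      apply Finset.sum_congr rfl
      intro i _
      show A (i + 2) - A i = (A (i + 1) + A (i + 1 + 1)) - (A i + A (i + 1))
      rw [show i + 1 + 1 = i + 2 by omega]
      ring
    have h3 : ∑ i ∈ Finset.range N, (1 / (2 * s) * G i + (A (i + 2) - A i))
        = 1 / (2 * s) * ∑ i ∈ Finset.range N, G i + ((A N + A (N + 1)) - (A 0 + A 1)) := by
      rw [Finset.sum_add_distrib, ← Finset.mul_sum, ht]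
    rw [h3] at h1
    have h4 : ∑ i ∈ Finset.range N, G i ≤ T :=
      Summable.sum_le_tsum _ (fun i _ => hG i) hGs
    have h5 : 1 / (2 * s) * ∑ i ∈ Finset.range N, G i ≤ 1 / (2 * s) * T :=
      mul_le_mul_of_nonneg_left h4 (by positivity)
    have h6 := hA 0
    have h7 := hA 1
    linarith
  have hS : ∀ N, ∑ i ∈ Finset.range N, U i
      ≤ 1 / (κ * s) * T + 2 / κ * (A N + A (N + 1)) := by
    intro N
    have h1 := hstep N
    have h2 : ∑ i ∈ Finset.range N, U i
        = 2 / κ * (κ / 2 * ∑ i ∈ Finset.range N, U i) := by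
      field_simp
    rw [h2]
    calc 2 / κ * (κ / 2 * ∑ i ∈ Finset.range N, U i)
        ≤ 2 / κ * (1 / (2 * s) * T + (A N + A (N + 1))) :=
          mul_le_mul_of_nonneg_left h1 (by positivity)
      _ = 1 / (κ * s) * T + 2 / κ * (A N + A (N + 1)) := by
          field_simp
  have hfix : ∀ N, ∑ i ∈ Finset.range N, U i ≤ 1 / (κ * s) * T := by
    intro N
    have hlim : Tendsto (fun M => 1 / (κ * s) * T + 2 / κ * (A M + A (M + 1)))
        atTop (nhds (1 / (κ * s) * T)) := by
      have h := ((hB0.const_mul (2 / κ)).const_add (1 / (κ * s) * T))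
      simpa using h
    refine ge_of_tendsto hlim ?_
    filter_upwards [eventually_ge_atTop N] with M hM
    calc ∑ i ∈ Finset.range N, U i ≤ ∑ i ∈ Finset.range M, U i :=
          Finset.sum_le_sum_of_subset_of_nonneg (Finset.range_subset_range.2 hM)
            (fun i _ _ => hU i)
      _ ≤ _ := hS M
  exact Real.tsum_le_of_sum_range_le hU hfix

/-- Abstract summation/telescoping argument behind the Carleman estimate (Theorem 3.1):
with `a_k = ‖μ₋u_k‖²`, `b_k = ‖μ₊u_{-k}‖²`, `c_k = ‖μ₊u_k‖²`, `d_k = ‖μ₋u_{-k}‖²`,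
`g_k = ‖(G_E u)_k‖²`, the termwise estimates with the weight choice
`ε_{k-2} = k^{2s}/(k-2)^{2s} - 1`, the bound `(k-1)^{2s}(1+1/ε_{k-1}) ≤ k^{2s+1}/(2s)`, and
superpolynomial decay of the boundary terms yield
`Σ_{k=m}^∞ k^{2s+1}(‖u_k‖² + ‖u_{-k}‖²) ≤ (1/(κs)) Σ_{k=m+1}^∞ k^{2s+1}(g_k + g_{-k})`. -/
theorem stmt_14 {H : Type*} [NormedAddCommGroup H] [InnerProductSpace ℂ H]
    (u : ℤ → H) (a b c d : ℕ → ℝ) (g : ℤ → ℝ) (ε : ℕ → ℝ)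
    (κ s : ℝ) (m : ℕ) (hκ : 0 < κ) (hs : 0 < s) (hm : 1 ≤ m)
    (ha : ∀ k, 0 ≤ a k) (hb : ∀ k, 0 ≤ b k) (hc : ∀ k, 0 ≤ c k) (hd : ∀ k, 0 ≤ d k)
    (hg : ∀ k : ℤ, 0 ≤ g k)
    (hεdef : ∀ k, m ≤ k → ε k = ((k : ℝ) + 2) ^ (2 * s) / (k : ℝ) ^ (2 * s) - 1)
    (hmain : ∀ k, m ≤ k →
      (k : ℝ) ^ (2 * s) * (a k + b k)
        + κ / 2 * (k : ℝ) ^ (2 * s + 1) * (‖u (k : ℤ)‖ ^ 2 + ‖u (-(k : ℤ))‖ ^ 2)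
      ≤ (k : ℝ) ^ (2 * s) * (c k + d k))
    (hsplit : ∀ k, m + 1 ≤ k →
      c (k - 1) + d (k - 1)
        ≤ (1 + 1 / ε (k - 1)) * (g (k : ℤ) + g (-(k : ℤ)))
          + (1 + ε (k - 1)) * (a (k + 1) + b (k + 1)))
    (hweight : ∀ k, m + 1 ≤ k →
      ((k : ℝ) - 1) ^ (2 * s) * (1 + 1 / ε (k - 1)) ≤ (k : ℝ) ^ (2 * s + 1) / (2 * s))
    (hdecay : ∀ p : ℕ, Tendsto (fun k : ℕ => (k : ℝ) ^ p * (a k + b k)) atTop (nhds 0))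
    (hgsum : Summable (fun k : ℕ => (k : ℝ) ^ (2 * s + 1) * (g (k : ℤ) + g (-(k : ℤ))))) :
    (∑' j : ℕ, ((m + j : ℕ) : ℝ) ^ (2 * s + 1)
        * (‖u ((m + j : ℕ) : ℤ)‖ ^ 2 + ‖u (-((m + j : ℕ) : ℤ))‖ ^ 2))
      ≤ 1 / (κ * s) * ∑' j : ℕ, ((m + 1 + j : ℕ) : ℝ) ^ (2 * s + 1)
        * (g ((m + 1 + j : ℕ) : ℤ) + g (-((m + 1 + j : ℕ) : ℤ))) := by
  -- boundary sequence tends to zero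
  have hAtend : Tendsto (fun k : ℕ => (k : ℝ) ^ (2 * s) * (a k + b k)) atTop (nhds 0) := by
    set p : ℕ := ⌈2 * s⌉₊ with hp
    have h0 : ∀ᶠ k : ℕ in atTop, 0 ≤ (k : ℝ) ^ (2 * s) * (a k + b k) := by
      filter_upwards with k
      have h1 := ha k; have h2 := hb k
      positivity
    have hle : ∀ᶠ k : ℕ in atTop,
        (k : ℝ) ^ (2 * s) * (a k + b k) ≤ (k : ℝ) ^ p * (a k + b k) := by
      filter_upwards [eventually_ge_atTop 1] with k hk
      have hk1 : (1 : ℝ) ≤ (k : ℝ) := by exact_mod_cast hk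
      have hle' : (k : ℝ) ^ (2 * s) ≤ (k : ℝ) ^ (p : ℝ) :=
        Real.rpow_le_rpow_of_exponent_le hk1 (Nat.le_ceil _)
      rw [Real.rpow_natCast] at hle'
      have h1 := ha k; have h2 := hb k
      exact mul_le_mul_of_nonneg_right hle' (by linarith)
    exact squeeze_zero' h0 hle (hdecay p)
  have hmt : Tendsto (fun i : ℕ => m + i) atTop atTop := by
    simpa [add_comm] using tendsto_add_atTop_nat m
  -- the key termwise estimate
  have key : ∀ i : ℕ,
      κ / 2 * (((m + i : ℕ) : ℝ) ^ (2 * s + 1)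
          * (‖u ((m + i : ℕ) : ℤ)‖ ^ 2 + ‖u (-((m + i : ℕ) : ℤ))‖ ^ 2))
        ≤ 1 / (2 * s) * (((m + 1 + i : ℕ) : ℝ) ^ (2 * s + 1)
          * (g ((m + 1 + i : ℕ) : ℤ) + g (-((m + 1 + i : ℕ) : ℤ))))
          + (((m + (i + 2) : ℕ) : ℝ) ^ (2 * s) * (a (m + (i + 2)) + b (m + (i + 2)))
            - ((m + i : ℕ) : ℝ) ^ (2 * s) * (a (m + i) + b (m + i))) := by
    intro i
    have h1 := hmain (m + i) (Nat.le_add_right m i)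
    have h2 := hsplit (m + 1 + i) (by omega)
    have h3 := hweight (m + 1 + i) (by omega)
    have h4 := hεdef (m + i) (Nat.le_add_right m i)
    rw [show m + 1 + i - 1 = m + i by omega, show m + 1 + i + 1 = m + (i + 2) by omega] at h2
    rw [show m + 1 + i - 1 = m + i by omega] at h3
    set x : ℝ := ((m + i : ℕ) : ℝ) with hx
    have hx1 : (1 : ℝ) ≤ x := by
      rw [hx]; exact_mod_cast Nat.one_le_iff_ne_zero.mpr (by omega)
    have hc1 : ((m + 1 + i : ℕ) : ℝ) = x + 1 := by rw [hx]; push_cast; ring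
    have hc2 : ((m + (i + 2) : ℕ) : ℝ) = x + 2 := by rw [hx]; push_cast; ring
    rw [hc1, show x + 1 - 1 = x by ring] at h3
    rw [hc1, hc2]
    have hxpos : (0 : ℝ) < x := by linarith
    have hx2s : (0 : ℝ) < x ^ (2 * s) := Real.rpow_pos_of_pos hxpos _
    have h1pe : x ^ (2 * s) * (1 + ε (m + i)) = (x + 2) ^ (2 * s) := by
      rw [h4]
      field_simp
      ring
    have hGt : 0 ≤ g ((m + 1 + i : ℕ) : ℤ) + g (-((m + 1 + i : ℕ) : ℤ)) :=
      add_nonneg (hg _) (hg _)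
    have h5 := mul_le_mul_of_nonneg_left h2 hx2s.le
    have h6 : x ^ (2 * s) * ((1 + 1 / ε (m + i)) * (g ((m + 1 + i : ℕ) : ℤ)
          + g (-((m + 1 + i : ℕ) : ℤ)))
          + (1 + ε (m + i)) * (a (m + (i + 2)) + b (m + (i + 2))))
        = x ^ (2 * s) * (1 + 1 / ε (m + i)) * (g ((m + 1 + i : ℕ) : ℤ)
          + g (-((m + 1 + i : ℕ) : ℤ)))
          + (x + 2) ^ (2 * s) * (a (m + (i + 2)) + b (m + (i + 2))) := by
      rw [← h1pe]; ring
    rw [h6] at h5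
    have h7 : x ^ (2 * s) * (1 + 1 / ε (m + i)) * (g ((m + 1 + i : ℕ) : ℤ)
          + g (-((m + 1 + i : ℕ) : ℤ)))
        ≤ (x + 1) ^ (2 * s + 1) / (2 * s) * (g ((m + 1 + i : ℕ) : ℤ)
          + g (-((m + 1 + i : ℕ) : ℤ))) :=
      mul_le_mul_of_nonneg_right h3 hGt
    have h8 : (x + 1) ^ (2 * s + 1) / (2 * s) * (g ((m + 1 + i : ℕ) : ℤ)
          + g (-((m + 1 + i : ℕ) : ℤ)))
        = 1 / (2 * s) * ((x + 1) ^ (2 * s + 1) * (g ((m + 1 + i : ℕ) : ℤ)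
          + g (-((m + 1 + i : ℕ) : ℤ)))) := by ring
    linarith
  -- apply the abstract lemma
  refine stmt_14_aux (A := fun i => ((m + i : ℕ) : ℝ) ^ (2 * s) * (a (m + i) + b (m + i)))
    hκ hs ?_ ?_ ?_ key ?_ ?_
  · intro i; positivity
  · intro i
    have h1 := hg ((m + 1 + i : ℕ) : ℤ); have h2 := hg (-((m + 1 + i : ℕ) : ℤ))
    positivity
  · intro i
    have h1 := ha (m + i); have h2 := hb (m + i)
    positivity
  · exact hAtend.comp hmt
  · exact ((summable_nat_add_iff (m + 1)).2 hgsum).congr (fun n => by rw [add_comm])
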